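/- If an infinite word u satisfies property R_3, then u has no weak bispecial factor. -/

import Mathlib

variable {A : Type*}

/-- The factor of `u` of length `n` starting at position `j`. -/
def factorAt (u : ℕ → A) (j n : ℕ) : List A :=
  (List.range n).map (fun i => u (j + i))

/-- `j` is an occurrence of the finite word `w` in `u`. -/
def OccursAt (u : ℕ → A) (w : List A) (j : ℕ) : Prop :=
  factorAt u j w.length = w

/-- `w` is a factor of the infinite word `u`. -/
def IsFactor (u : ℕ → A) (w : List A) : Prop :=
  ∃ j, OccursAt u w j

/-- `v` is a return word of `w` in `u`: the word between two successive occurrences of `w`. -/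
def IsReturnWord (u : ℕ → A) (w v : List A) : Prop :=
  ∃ j k, j < k ∧ OccursAt u w j ∧ OccursAt u w k ∧
    (∀ l, j < l → l < k → ¬ OccursAt u w l) ∧ v = factorAt u j (k - j)

/-- The set `R(w)` of return words of `w` in `u`. -/
def returnWords (u : ℕ → A) (w : List A) : Set (List A) :=
  {v | IsReturnWord u w v}

/-- Property `R_m`: every factor of `u` has exactly `m` return words. -/
def PropertyR (u : ℕ → A) (m : ℕ) : Prop :=
  ∀ w, IsFactor u w → (returnWords u w).Finite ∧ (returnWords u w).ncard = m

/-- The set of left extensions of `w`. -/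
def leftExt (u : ℕ → A) (w : List A) : Set A := {a | IsFactor u (a :: w)}

/-- The set of right extensions of `w`. -/
def rightExt (u : ℕ → A) (w : List A) : Set A := {b | IsFactor u (w ++ [b])}

def LeftSpecial (u : ℕ → A) (w : List A) : Prop := 2 ≤ (leftExt u w).ncard

def RightSpecial (u : ℕ → A) (w : List A) : Prop := 2 ≤ (rightExt u w).ncard

/-- The set of pairs `(a, b)` such that `a w b` is a factor of `u`. -/
def extPairs (u : ℕ → A) (w : List A) : Set (A × A) :=
  {p | IsFactor u (p.1 :: (w ++ [p.2]))}

/-- The bilateral order `B(w)`. -/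
noncomputable def bilateralOrder (u : ℕ → A) (w : List A) : ℤ :=
  ((extPairs u w).ncard : ℤ) - (leftExt u w).ncard - (rightExt u w).ncard + 1

/-- `w` is a weak bispecial factor of `u`. -/
def WeakBispecial (u : ℕ → A) (w : List A) : Prop :=
  IsFactor u w ∧ bilateralOrder u w < 0

/-- The factor complexity of `u`. -/
noncomputable def Complexity (u : ℕ → A) (n : ℕ) : ℕ :=
  {w : List A | w.length = n ∧ IsFactor u w}.ncard

/-- `u` is recurrent: every factor occurs at least twice. -/
def Recurrent (u : ℕ → A) : Prop :=
  ∀ w, IsFactor u w → ∃ j k, j < k ∧ OccursAt u w j ∧ OccursAt u w k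

/-- `u` is uniformly recurrent. -/
def UniformlyRecurrent (u : ℕ → A) : Prop :=
  ∀ n : ℕ, ∃ N : ℕ, ∀ w, IsFactor u w → w.length = N →
    ∀ v, IsFactor u v → v.length = n → v <:+: w

def EventuallyPeriodic (u : ℕ → A) : Prop :=
  ∃ p, 0 < p ∧ ∃ N, ∀ n, N ≤ n → u (n + p) = u n

/-- `w` is a maximal right special factor. -/
def MaximalRightSpecial (u : ℕ → A) (w : List A) : Prop :=
  IsFactor u w ∧ RightSpecial u w ∧
    ∀ v, IsFactor u v → RightSpecial u v → w <:+ v → v = w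

/-- The return word `v` of `w` starts with the letter `b`. -/
def StartsWithLetter (w v : List A) (b : A) : Prop := (w ++ [b]) <+: (v ++ w)

section Basics
variable {A : Type*} {u : ℕ → A}

lemma factorAt_length (u : ℕ → A) (j n : ℕ) : (factorAt u j n).length = n := by
  simp [factorAt]

lemma factorAt_getElem {j n i : ℕ} (h : i < n) :
    (factorAt u j n)[i]'(by simpa [factorAt_length] using h) = u (j + i) := by
  simp [factorAt]

lemma occursAt_iff_forall {w : List A} {j : ℕ} :
    OccursAt u w j ↔ ∀ i (h : i < w.length), w[i] = u (j + i) := by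
  constructor
  · intro h i hi
    have := List.getElem_of_eq h.symm (by simpa [factorAt_length] using hi)
    rw [this]; exact factorAt_getElem hi
  · intro h
    apply List.ext_getElem (by simp [factorAt_length])
    intro i h1 h2
    rw [factorAt_getElem (by simpa [factorAt_length] using h1)]
    exact (h i h2).symm

lemma factorAt_add (j m n : ℕ) :
    factorAt u j (m + n) = factorAt u j m ++ factorAt u (j + m) n := by
  simp only [factorAt, List.range_add, List.map_append, List.map_map]
  congr 1
  apply List.map_congr_left
  intro i _
  simp [Function.comp]; ring_nf

lemma factorAt_succ (j n : ℕ) :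
    factorAt u j (n + 1) = u j :: factorAt u (j + 1) n := by
  simp only [factorAt, List.range_succ_eq_map, List.map_cons, List.map_map]
  congr 1
  apply List.map_congr_left
  intro i _
  simp [Function.comp, Nat.succ_eq_add_one]; ring_nf

lemma factorAt_one (j : ℕ) : factorAt u j 1 = [u j] := rfl

lemma factorAt_dropLast (j n : ℕ) :
    (factorAt u j n).dropLast = factorAt u j (n - 1) := by
  cases n with
  | zero => simp [factorAt]
  | succ m =>
    have : m + 1 = m + 1 := rfl
    rw [show m + 1 - 1 = m from rfl, factorAt_add j m 1, factorAt_one,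
      List.dropLast_concat]

lemma occursAt_factorAt (j n : ℕ) : OccursAt u (factorAt u j n) j := by
  unfold OccursAt
  rw [factorAt_length]

lemma occursAt_append {v x : List A} {j : ℕ} :
    OccursAt u (v ++ x) j ↔ OccursAt u v j ∧ OccursAt u x (j + v.length) := by
  unfold OccursAt
  rw [List.length_append, factorAt_add]
  constructor
  · intro h
    have h1 := List.append_inj h (by rw [factorAt_length])
    exact ⟨h1.1, h1.2⟩
  · intro ⟨h1, h2⟩
    rw [h1, h2]

lemma occursAt_cons {a : A} {v : List A} {j : ℕ} :
    OccursAt u (a :: v) j ↔ u j = a ∧ OccursAt u v (j + 1) := by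
  have : a :: v = [a] ++ v := rfl
  rw [this, occursAt_append]
  unfold OccursAt
  simp [factorAt_one]

lemma occursAt_transfer {W v : List A} {p q l : ℕ} (hp : OccursAt u W p)
    (hq : OccursAt u W q) (hl : l + v.length ≤ W.length)
    (h : OccursAt u v (p + l)) : OccursAt u v (q + l) := by
  rw [occursAt_iff_forall] at *
  intro i hi
  have hli : l + i < W.length := by omega
  have e1 := hp (l + i) hli
  have e2 := hq (l + i) hli
  have e3 := h i hi
  rw [e3]
  rw [show p + l + i = p + (l + i) by ring] at e3 ⊢
  rw [show q + l + i = q + (l + i) by ring]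
  rw [← e1, e2]

lemma isFactor_factorAt (j n : ℕ) : IsFactor u (factorAt u j n) :=
  ⟨j, occursAt_factorAt j n⟩

end Basics

section Rec
variable {A : Type*} {u : ℕ → A}

lemma factorAt_getD {j n i : ℕ} (df : A) (h : i < n) :
    (factorAt u j n).getD i df = u (j + i) := by
  rw [List.getD_eq_getElem _ _ (by simpa [factorAt_length] using h)]
  exact factorAt_getElem h

lemma returnWords_two_occ (h : PropertyR u 3) {w : List A} (hw : IsFactor u w) :
    ∃ j k, j < k ∧ OccursAt u w j ∧ OccursAt u w k := by
  obtain ⟨hfin, hcard⟩ := h w hw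
  obtain ⟨v, hv⟩ := Set.nonempty_of_ncard_ne_zero (s := returnWords u w)
    (by rw [hcard]; norm_num)
  obtain ⟨j, k, hjk, h1, h2, _, _⟩ := hv
  exact ⟨j, k, hjk, h1, h2⟩

lemma exists_occ_gt_of_occ (h : PropertyR u 3) {w : List A} {j : ℕ}
    (hj : OccursAt u w j) : ∃ k, j < k ∧ OccursAt u w k := by
  obtain ⟨p, q, hpq, hp, hq⟩ :=
    returnWords_two_occ h (isFactor_factorAt (u := u) 0 (j + w.length))
  have h0 : OccursAt u (factorAt u 0 (j + w.length)) 0 := occursAt_factorAt _ _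
  have hjl : j + w.length ≤ (factorAt u 0 (j + w.length)).length := by
    rw [factorAt_length]
  have h' : OccursAt u w (0 + j) := by simpa using hj
  have := occursAt_transfer h0 hq hjl h'
  exact ⟨q + j, by omega, this⟩

lemma exists_occ_gt (h : PropertyR u 3) {w : List A} (hw : IsFactor u w) (N : ℕ) :
    ∃ k, N < k ∧ OccursAt u w k := by
  induction N with
  | zero =>
    obtain ⟨j, hj⟩ := hw
    obtain ⟨k, hk1, hk2⟩ := exists_occ_gt_of_occ h hj
    exact ⟨k, by omega, hk2⟩
  | succ n ih =>
    obtain ⟨k, hk1, hk2⟩ := ih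
    by_cases hc : n + 1 < k
    · exact ⟨k, hc, hk2⟩
    · obtain ⟨k', h1, h2⟩ := exists_occ_gt_of_occ h hk2
      exact ⟨k', by omega, h2⟩

lemma occSet_infinite (h : PropertyR u 3) {w : List A} (hw : IsFactor u w) :
    {j | OccursAt u w j}.Infinite := by
  apply Set.infinite_of_not_bddAbove
  rintro ⟨N, hN⟩
  obtain ⟨k, h1, h2⟩ := exists_occ_gt h hw N
  exact absurd (hN h2) (by omega)

end Rec

noncomputable def occn (u : ℕ → A) (w : List A) : ℕ → ℕ :=
  Nat.nth (fun j => OccursAt u w j)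

noncomputable def ret (u : ℕ → A) (w : List A) (n : ℕ) : List A :=
  factorAt u (occn u w n) (occn u w (n+1) - occn u w n)

noncomputable def Bf (u : ℕ → A) (w v : List A) : A := (v ++ w).getD w.length (u 0)

noncomputable def Af (u : ℕ → A) (v : List A) : A := v.getD (v.length - 1) (u 0)

section Enum
variable {A : Type*} {u : ℕ → A} {w : List A}
  (hinf : {j | OccursAt u w j}.Infinite)
include hinf

lemma occn_occurs (n : ℕ) : OccursAt u w (occn u w n) :=
  Nat.nth_mem_of_infinite hinf n

lemma occn_lt {m n : ℕ} (h : m < n) : occn u w m < occn u w n :=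
  (Nat.nth_lt_nth hinf).mpr h

lemma occn_le {m n : ℕ} (h : m ≤ n) : occn u w m ≤ occn u w n :=
  (Nat.nth_le_nth hinf).mpr h

lemma occn_succ_lt (n : ℕ) : occn u w n < occn u w (n+1) :=
  occn_lt hinf (by omega)

omit hinf in
lemma occn_surj {j : ℕ} (hj : OccursAt u w j) : ∃ n, occn u w n = j := by
  classical
  exact ⟨Nat.count (fun j => OccursAt u w j) j, Nat.nth_count hj⟩

lemma occn_not_between {n l : ℕ} (h1 : occn u w n < l) (h2 : l < occn u w (n+1)) :
    ¬OccursAt u w l := by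
  intro hl
  obtain ⟨m, hm⟩ := occn_surj (u := u) (w := w) hl
  subst hm
  have hm1 : n < m := by
    by_contra hc
    exact absurd (occn_le hinf (show m ≤ n by omega)) (by omega)
  have hm2 : m < n + 1 := by
    by_contra hc
    exact absurd (occn_le hinf (show n + 1 ≤ m by omega)) (by omega)
  omega

lemma occn_succ_eq {n k : ℕ} (hk : OccursAt u w k) (h1 : occn u w n < k)
    (h2 : ∀ l, occn u w n < l → l < k → ¬OccursAt u w l) : occn u w (n+1) = k := by
  obtain ⟨m, hm⟩ := occn_surj (u := u) (w := w) hk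
  subst hm
  have hnm : n < m := by
    by_contra hc
    exact absurd (occn_le hinf (show m ≤ n by omega)) (by omega)
  rcases Nat.lt_or_ge (n+1) m with hc | hc
  · exact absurd (occn_occurs hinf (n+1))
      (h2 _ (occn_lt hinf (by omega)) (occn_lt hinf hc))
  · congr 1; omega

omit hinf in
lemma ret_length (n : ℕ) : (ret u w n).length = occn u w (n+1) - occn u w n := by
  rw [ret, factorAt_length]

lemma ret_length_pos (n : ℕ) : 0 < (ret u w n).length := by
  rw [ret_length]
  have := occn_succ_lt (u := u) (w := w) hinf n
  omega

lemma ret_isReturnWord (n : ℕ) : IsReturnWord u w (ret u w n) :=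
  ⟨occn u w n, occn u w (n+1), occn_succ_lt hinf n, occn_occurs hinf n,
    occn_occurs hinf (n+1), fun l h1 h2 => occn_not_between hinf h1 h2, rfl⟩

lemma ret_mem (n : ℕ) : ret u w n ∈ returnWords u w := ret_isReturnWord hinf n

lemma returnWords_eq_ret {v : List A} (hv : v ∈ returnWords u w) :
    ∃ n, ret u w n = v := by
  obtain ⟨j, k, hjk, hj, hk, hbet, hveq⟩ := hv
  obtain ⟨m, hm⟩ := occn_surj (u := u) (w := w) hj
  subst hm
  have hsk := occn_succ_eq hinf hk hjk hbet
  exact ⟨m, by rw [ret, hsk, hveq]⟩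

lemma factorAt_two (n : ℕ) :
    factorAt u (occn u w n) (occn u w (n+2) - occn u w n) =
      ret u w n ++ ret u w (n+1) := by
  have h1 : occn u w n < occn u w (n+1) := occn_lt hinf (by omega)
  have h2 : occn u w (n+1) < occn u w (n+2) := occn_lt hinf (by omega)
  rw [show occn u w (n+2) - occn u w n =
    (occn u w (n+1) - occn u w n) + (occn u w (n+2) - occn u w (n+1)) by omega,
    factorAt_add, show occn u w n + (occn u w (n+1) - occn u w n) = occn u w (n+1) by omega]
  rfl

lemma factorAt_three (n : ℕ) :
    factorAt u (occn u w n) (occn u w (n+3) - occn u w n) =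
      ret u w n ++ ret u w (n+1) ++ ret u w (n+2) := by
  have h1 : occn u w n < occn u w (n+1) := occn_lt hinf (by omega)
  have h2 : occn u w (n+1) < occn u w (n+2) := occn_lt hinf (by omega)
  have h3 : occn u w (n+2) < occn u w (n+3) := occn_lt hinf (by omega)
  rw [show occn u w (n+3) - occn u w n =
    (occn u w (n+2) - occn u w n) + (occn u w (n+3) - occn u w (n+2)) by omega,
    factorAt_add,
    show occn u w n + (occn u w (n+2) - occn u w n) = occn u w (n+2) by omega,
    factorAt_two hinf n]
  rfl

lemma retw_eq (n : ℕ) :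
    factorAt u (occn u w n) ((occn u w (n+1) - occn u w n) + w.length) =
      ret u w n ++ w := by
  rw [factorAt_add]
  congr 1
  rw [show occn u w n + (occn u w (n+1) - occn u w n) = occn u w (n+1) by
    have := occn_succ_lt (u := u) (w := w) hinf n; omega]
  exact occn_occurs hinf (n+1)

lemma retw_occurs (n : ℕ) : OccursAt u (ret u w n ++ w) (occn u w n) := by
  unfold OccursAt
  rw [List.length_append, ret_length, retw_eq hinf n]

lemma u_Bf (n : ℕ) : u (occn u w n + w.length) = Bf u w (ret u w n) := by
  have hlt := occn_succ_lt (u := u) (w := w) hinf n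
  rw [Bf, ← retw_eq hinf n, factorAt_getD _ (by omega)]

lemma u_Af (n : ℕ) : u (occn u w (n+1) - 1) = Af u (ret u w n) := by
  have hlt := occn_succ_lt (u := u) (w := w) hinf n
  rw [Af, ret_length, ret, factorAt_getD _ (by omega)]
  congr 1
  omega

omit hinf in
lemma singleton_occurs (p : ℕ) : OccursAt u [u p] p := by
  unfold OccursAt
  simp [factorAt_one]

lemma wb_occurs (n : ℕ) : OccursAt u (w ++ [Bf u w (ret u w n)]) (occn u w n) := by
  rw [occursAt_append]
  exact ⟨occn_occurs hinf n, by rw [← u_Bf hinf n]; exact singleton_occurs _⟩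

lemma aw_occurs (n : ℕ) : OccursAt u (Af u (ret u w n) :: w) (occn u w (n+1) - 1) := by
  have h1 : 1 ≤ occn u w (n+1) := by
    have := occn_succ_lt (u := u) (w := w) hinf n; omega
  rw [occursAt_cons]
  constructor
  · exact u_Af hinf n
  · rw [show occn u w (n+1) - 1 + 1 = occn u w (n+1) by omega]
    exact occn_occurs hinf (n+1)

lemma awb_occurs (n : ℕ) :
    OccursAt u (Af u (ret u w n) :: (w ++ [Bf u w (ret u w (n+1))]))
      (occn u w (n+1) - 1) := by
  have h1 : 1 ≤ occn u w (n+1) := by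
    have := occn_succ_lt (u := u) (w := w) hinf n; omega
  rw [occursAt_cons]
  constructor
  · exact u_Af hinf n
  · rw [show occn u w (n+1) - 1 + 1 = occn u w (n+1) by omega]
    exact wb_occurs hinf (n+1)

lemma occR {b : A} {p : ℕ} :
    OccursAt u (w ++ [b]) p ↔ ∃ n, p = occn u w n ∧ Bf u w (ret u w n) = b := by
  constructor
  · intro hp
    rw [occursAt_append] at hp
    obtain ⟨hw1, hb1⟩ := hp
    obtain ⟨n, hn⟩ := occn_surj (u := u) (w := w) hw1
    refine ⟨n, hn.symm, ?_⟩
    rw [occursAt_cons] at hb1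
    rw [← u_Bf hinf n, hn]
    exact hb1.1
  · rintro ⟨n, rfl, rfl⟩
    exact wb_occurs hinf n

lemma occT {t : List A} {n₀ : ℕ} (hn₀ : ret u w n₀ = t) {p : ℕ} :
    OccursAt u (t ++ w) p ↔ ∃ n, p = occn u w n ∧ ret u w n = t := by
  constructor
  · intro hp
    have htocc : OccursAt u (t ++ w) (occn u w n₀) := by
      rw [← hn₀]; exact retw_occurs hinf n₀
    have hlen : t.length = occn u w (n₀+1) - occn u w n₀ := by
      rw [← hn₀, ret_length]
    have hwp : OccursAt u w p := by
      have := occursAt_transfer htocc hp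
        (show 0 + w.length ≤ (t ++ w).length by simp)
        (by simpa using occn_occurs hinf n₀)
      simpa using this
    obtain ⟨m, hm⟩ := occn_surj (u := u) (w := w) hwp
    subst hm
    have hwpt : OccursAt u w (occn u w m + t.length) :=
      (occursAt_append.mp hp).2
    have hbet : ∀ l, occn u w m < l → l < occn u w m + t.length → ¬OccursAt u w l := by
      intro l hl1 hl2 hocc
      have hl3 : l - occn u w m + w.length ≤ (t ++ w).length := by
        rw [List.length_append]; omega
      have : OccursAt u w (occn u w m + (l - occn u w m)) := by
        rw [show occn u w m + (l - occn u w m) = l by omega]; exact hocc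
      have htr := occursAt_transfer hp htocc hl3 this
      have hslt := occn_succ_lt (u := u) (w := w) hinf n₀
      exact occn_not_between hinf
        (show occn u w n₀ < occn u w n₀ + (l - occn u w m) by omega)
        (show occn u w n₀ + (l - occn u w m) < occn u w (n₀+1) by omega) htr
    have hsucc : occn u w (m+1) = occn u w m + t.length := by
      apply occn_succ_eq hinf hwpt
      · have := ret_length_pos (u := u) (w := w) hinf n₀
        rw [hn₀] at this; omega
      · exact hbet
    refine ⟨m, rfl, ?_⟩
    rw [ret, hsucc, show occn u w m + t.length - occn u w m = t.length by omega]
    exact (occursAt_append.mp hp).1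
  · rintro ⟨n, rfl, rfl⟩
    exact retw_occurs hinf n

lemma occL {a : A} {p : ℕ} :
    OccursAt u (a :: w) p ↔
      (p + 1 = occn u w 0 ∧ u p = a) ∨
        ∃ n, p = occn u w (n+1) - 1 ∧ Af u (ret u w n) = a := by
  constructor
  · intro hp
    rw [occursAt_cons] at hp
    obtain ⟨hup, hw1⟩ := hp
    obtain ⟨m, hm⟩ := occn_surj (u := u) (w := w) hw1
    match m, hm with
    | 0, hm => exact Or.inl ⟨by omega, hup⟩
    | (n+1), hm =>
      refine Or.inr ⟨n, by omega, ?_⟩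
      rw [← u_Af hinf n, show occn u w (n+1) - 1 = p by omega]
      exact hup
  · rintro (⟨h1, h2⟩ | ⟨n, rfl, rfl⟩)
    · rw [occursAt_cons]
      exact ⟨h2, by rw [h1]; exact occn_occurs hinf 0⟩
    · exact aw_occurs hinf n

lemma occLR {a b : A} {p : ℕ} :
    OccursAt u (a :: (w ++ [b])) p ↔
      (p + 1 = occn u w 0 ∧ u p = a ∧ Bf u w (ret u w 0) = b) ∨
        ∃ n, p = occn u w (n+1) - 1 ∧ Af u (ret u w n) = a ∧
          Bf u w (ret u w (n+1)) = b := by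
  rw [occursAt_cons, occR hinf]
  constructor
  · rintro ⟨hup, n, hn, hb⟩
    match n, hn with
    | 0, hn => exact Or.inl ⟨by omega, hup, hb⟩
    | (m+1), hn =>
      have h1 : 1 ≤ occn u w (m+1) := by
        have := occn_succ_lt (u := u) (w := w) hinf m; omega
      refine Or.inr ⟨m, by omega, ?_, hb⟩
      rw [← u_Af hinf m, show occn u w (m+1) - 1 = p by omega]
      exact hup
  · rintro (⟨h1, h2, h3⟩ | ⟨n, hp, ha, hb⟩)
    · exact ⟨h2, 0, by omega, h3⟩
    · have h1 : 1 ≤ occn u w (n+1) := by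
        have := occn_succ_lt (u := u) (w := w) hinf n; omega
      refine ⟨by rw [hp, u_Af hinf n]; exact ha, n+1, by omega, hb⟩

lemma pair_mem (n : ℕ) : (Af u (ret u w n), Bf u w (ret u w (n+1))) ∈ extPairs u w :=
  ⟨occn u w (n+1) - 1, awb_occurs hinf n⟩

lemma ret_inf (hPR : PropertyR u 3) {v : List A} (hv : v ∈ returnWords u w) (N : ℕ) :
    ∃ n, N < n ∧ ret u w n = v := by
  obtain ⟨n₀, hn₀⟩ := returnWords_eq_ret hinf hv
  have hfac : IsFactor u (v ++ w) := ⟨occn u w n₀, by rw [← hn₀]; exact retw_occurs hinf n₀⟩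
  obtain ⟨p, hp1, hp2⟩ := exists_occ_gt hPR hfac (occn u w N)
  obtain ⟨m, hm, hmv⟩ := (occT hinf hn₀).mp hp2
  refine ⟨m, ?_, hmv⟩
  by_contra hc
  exact absurd (occn_le hinf (show m ≤ N by omega)) (by omega)

end Enum

section Graph
variable {α β : Type*}

def estep (P : Finset (α × β)) (e f : α × β) : Prop :=
  e ∈ P ∧ f ∈ P ∧ (e.1 = f.1 ∨ e.2 = f.2)

def elinked (P : Finset (α × β)) : (α × β) → (α × β) → Prop :=
  Relation.ReflTransGen (estep P)

lemma estep_symm {P : Finset (α × β)} : Symmetric (estep P) := by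
  rintro e f ⟨h1, h2, h3⟩
  exact ⟨h2, h1, h3.imp Eq.symm Eq.symm⟩

lemma elinked_symm {P : Finset (α × β)} {e f : α × β} (h : elinked P e f) :
    elinked P f e :=
  (@Relation.ReflTransGen.stdSymm _ (estep P) ⟨fun _ _ hh => estep_symm hh⟩).symm _ _ h

lemma elinked_mono {P Q : Finset (α × β)} (h : P ⊆ Q) {e f : α × β}
    (hl : elinked P e f) : elinked Q e f :=
  by
  induction hl with
  | refl => exact Relation.ReflTransGen.refl
  | tail _ hs ih => exact ih.tail ⟨h hs.1, h hs.2.1, hs.2.2⟩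

lemma elinked_restrict {P S : Finset (α × β)}
    (hcl : ∀ e f, e ∈ S → estep P e f → f ∈ S) {e f : α × β} (he : e ∈ S)
    (h : elinked P e f) : f ∈ S ∧ elinked S e f := by
  induction h with
  | refl => exact ⟨he, Relation.ReflTransGen.refl⟩
  | @tail b c hpath hstep ih =>
    have hb : b ∈ S := ih.1
    have hc : c ∈ S := hcl b c hb hstep
    exact ⟨hc, ih.2.tail ⟨hb, hc, hstep.2.2⟩⟩

lemma elinked_reach [DecidableEq α] [DecidableEq β] {P : Finset (α × β)} {e f : α × β}
    (h : elinked P e f) :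
    f = e ∨ (f ∈ P.erase e ∧ ∃ g ∈ P.erase e, (g.1 = e.1 ∨ g.2 = e.2) ∧
      elinked (P.erase e) g f) := by
  classical
  induction h with
  | refl => exact Or.inl rfl
  | @tail b c hpath hstep ih =>
    by_cases hce : c = e
    · exact Or.inl hce
    · have hcP' : c ∈ P.erase e := Finset.mem_erase.mpr ⟨hce, hstep.2.1⟩
      rcases ih with hbe | ⟨hbP', g, hg, hsh, hlink⟩
      · subst hbe
        refine Or.inr ⟨hcP', c, hcP', ?_, Relation.ReflTransGen.refl⟩
        exact hstep.2.2.imp Eq.symm Eq.symm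
      · refine Or.inr ⟨hcP', g, hg, hsh, hlink.tail ⟨hbP', hcP', hstep.2.2⟩⟩

lemma conn_card [DecidableEq α] [DecidableEq β] (P : Finset (α × β)) :
    (∀ e ∈ P, ∀ f ∈ P, elinked P e f) → P.Nonempty →
    (P.image Prod.fst).card + (P.image Prod.snd).card ≤ P.card + 1 := by
  classical
  induction P using Finset.strongInductionOn with
  | _ P IH =>
  intro hconn hne
  obtain ⟨e, he⟩ := hne
  set P' := P.erase e with hP'def
  have hPP' : P = insert e P' := (Finset.insert_erase he).symm
  have hP'sub : P' ⊂ P := Finset.erase_ssubset he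
  by_cases hP'e : P' = ∅
  · have : P = {e} := by rw [hPP', hP'e]; rfl
    subst this
    simp
  have hP'ne : P'.Nonempty := Finset.nonempty_iff_ne_empty.mpr hP'e
  set Ca := P'.filter (fun f => ∃ g ∈ P', g.1 = e.1 ∧ elinked P' g f) with hCadef
  set Cb := P'.filter (fun f => ∃ g ∈ P', g.2 = e.2 ∧ elinked P' g f) with hCbdef
  have hCaP' : Ca ⊆ P' := Finset.filter_subset _ _
  have hCbP' : Cb ⊆ P' := Finset.filter_subset _ _
  have hcover : ∀ f ∈ P', f ∈ Ca ∨ f ∈ Cb := by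
    intro f hf
    have hfP : f ∈ P := Finset.mem_of_mem_erase hf
    rcases elinked_reach (hconn e he f hfP) with hfe | ⟨hfP', g, hg, hsh, hlink⟩
    · exact absurd ((Finset.mem_erase.mp hf).1) (by simp [hfe])
    · rcases hsh with h1 | h2
      · exact Or.inl (Finset.mem_filter.mpr ⟨hfP', g, hg, h1, hlink⟩)
      · exact Or.inr (Finset.mem_filter.mpr ⟨hfP', g, hg, h2, hlink⟩)
  -- closure of Ca and Cb under steps in P'
  have hclCa : ∀ f f', f ∈ Ca → estep P' f f' → f' ∈ Ca := by
    intro f f' hf hstep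
    obtain ⟨hfP', g, hg, hg1, hlink⟩ := Finset.mem_filter.mp hf
    exact Finset.mem_filter.mpr ⟨hstep.2.1, g, hg, hg1, hlink.tail hstep⟩
  have hclCb : ∀ f f', f ∈ Cb → estep P' f f' → f' ∈ Cb := by
    intro f f' hf hstep
    obtain ⟨hfP', g, hg, hg1, hlink⟩ := Finset.mem_filter.mp hf
    exact Finset.mem_filter.mpr ⟨hstep.2.1, g, hg, hg1, hlink.tail hstep⟩
  have hCawit : ∀ f ∈ Ca, ∃ g ∈ Ca, g.1 = e.1 ∧ elinked P' g f := by
    intro f hf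
    obtain ⟨hfP', g, hg, hg1, hlink⟩ := Finset.mem_filter.mp hf
    exact ⟨g, Finset.mem_filter.mpr ⟨hg, g, hg, hg1, Relation.ReflTransGen.refl⟩,
      hg1, hlink⟩
  have hCbwit : ∀ f ∈ Cb, ∃ g ∈ Cb, g.2 = e.2 ∧ elinked P' g f := by
    intro f hf
    obtain ⟨hfP', g, hg, hg1, hlink⟩ := Finset.mem_filter.mp hf
    exact ⟨g, Finset.mem_filter.mpr ⟨hg, g, hg, hg1, Relation.ReflTransGen.refl⟩,
      hg1, hlink⟩
  have hCaconn : ∀ f ∈ Ca, ∀ f' ∈ Ca, elinked Ca f f' := by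
    intro f hf f' hf'
    obtain ⟨g, hgCa, hg1, hlink⟩ := hCawit f hf
    obtain ⟨g', hg'Ca, hg'1, hlink'⟩ := hCawit f' hf'
    have hpath : elinked P' f f' :=
      ((elinked_symm hlink).tail
        ⟨hCaP' hgCa, hCaP' hg'Ca, Or.inl (hg1.trans hg'1.symm)⟩).trans hlink'
    exact (elinked_restrict hclCa hf hpath).2
  have hCbconn : ∀ f ∈ Cb, ∀ f' ∈ Cb, elinked Cb f f' := by
    intro f hf f' hf'
    obtain ⟨g, hgCb, hg1, hlink⟩ := hCbwit f hf
    obtain ⟨g', hg'Cb, hg'1, hlink'⟩ := hCbwit f' hf'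
    have hpath : elinked P' f f' :=
      ((elinked_symm hlink).tail
        ⟨hCbP' hgCb, hCbP' hg'Cb, Or.inr (hg1.trans hg'1.symm)⟩).trans hlink'
    exact (elinked_restrict hclCb hf hpath).2
  have himgP : P.image Prod.fst = insert e.1 (P'.image Prod.fst) := by
    rw [hPP', Finset.image_insert]
  have himgPs : P.image Prod.snd = insert e.2 (P'.image Prod.snd) := by
    rw [hPP', Finset.image_insert]
  by_cases hCae : Ca = ∅
  · -- P' = Cb
    have hP'Cb : P' = Cb := by
      apply Finset.Subset.antisymm _ hCbP'
      intro f hf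
      rcases hcover f hf with h | h
      · rw [hCae] at h; exact absurd h (Finset.notMem_empty f)
      · exact h
    have hconn' : ∀ f ∈ P', ∀ f' ∈ P', elinked P' f f' := by
      rw [hP'Cb] at *
      exact fun f hf f' hf' => elinked_mono (le_refl _) (hCbconn f hf f' hf')
    have hIH := IH P' hP'sub hconn' hP'ne
    obtain ⟨f, hfCb⟩ : Cb.Nonempty := hP'Cb ▸ hP'ne
    obtain ⟨g, hgCb, hg2, _⟩ := hCbwit f hfCb
    have he2 : e.2 ∈ P'.image Prod.snd :=
      Finset.mem_image.mpr ⟨g, hCbP' hgCb, hg2⟩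
    have hc1 : (P.image Prod.fst).card ≤ (P'.image Prod.fst).card + 1 := by
      rw [himgP]; exact Finset.card_insert_le _ _
    have hc2 : (P.image Prod.snd).card ≤ (P'.image Prod.snd).card := by
      rw [himgPs]
      exact Finset.card_le_card (Finset.insert_subset he2 (le_refl _))
    have hcP : P.card = P'.card + 1 := by
      rw [hPP']
      exact Finset.card_insert_of_notMem (Finset.notMem_erase e P)
    omega
  by_cases hCbe : Cb = ∅
  · have hP'Ca : P' = Ca := by
      apply Finset.Subset.antisymm _ hCaP'
      intro f hf
      rcases hcover f hf with h | h
      · exact h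
      · rw [hCbe] at h; exact absurd h (Finset.notMem_empty f)
    have hconn' : ∀ f ∈ P', ∀ f' ∈ P', elinked P' f f' := by
      rw [hP'Ca] at *
      exact fun f hf f' hf' => elinked_mono (le_refl _) (hCaconn f hf f' hf')
    have hIH := IH P' hP'sub hconn' hP'ne
    obtain ⟨f, hfCa⟩ : Ca.Nonempty := hP'Ca ▸ hP'ne
    obtain ⟨g, hgCa, hg1, _⟩ := hCawit f hfCa
    have he1 : e.1 ∈ P'.image Prod.fst :=
      Finset.mem_image.mpr ⟨g, hCaP' hgCa, hg1⟩
    have hc1 : (P.image Prod.fst).card ≤ (P'.image Prod.fst).card := by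
      rw [himgP]
      exact Finset.card_le_card (Finset.insert_subset he1 (le_refl _))
    have hc2 : (P.image Prod.snd).card ≤ (P'.image Prod.snd).card + 1 := by
      rw [himgPs]; exact Finset.card_insert_le _ _
    have hcP : P.card = P'.card + 1 := by
      rw [hPP']
      exact Finset.card_insert_of_notMem (Finset.notMem_erase e P)
    omega
  have hCane : Ca.Nonempty := Finset.nonempty_iff_ne_empty.mpr hCae
  have hCbne : Cb.Nonempty := Finset.nonempty_iff_ne_empty.mpr hCbe
  by_cases hint : ∃ f, f ∈ Ca ∧ f ∈ Cb
  · -- P' is connected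
    obtain ⟨f₀, hf₀a, hf₀b⟩ := hint
    have hCbCa : ∀ f ∈ Cb, f ∈ Ca := by
      intro f hf
      obtain ⟨hfP', g, hg, hg2, hlink⟩ := Finset.mem_filter.mp hf
      obtain ⟨hf₀P', g', hg', hg'2, hlink'⟩ := Finset.mem_filter.mp hf₀b
      obtain ⟨hf₀P'2, g'', hg'', hg''1, hlink''⟩ := Finset.mem_filter.mp hf₀a
      have : elinked P' g'' f :=
        hlink''.trans ((elinked_symm hlink').tail
          ⟨hg', hg, Or.inr (hg'2.trans hg2.symm)⟩ |>.trans hlink)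
      exact Finset.mem_filter.mpr ⟨hfP', g'', hg'', hg''1, this⟩
    have hP'Ca : P' = Ca := by
      apply Finset.Subset.antisymm _ hCaP'
      intro f hf
      rcases hcover f hf with h | h
      · exact h
      · exact hCbCa f h
    have hconn' : ∀ f ∈ P', ∀ f' ∈ P', elinked P' f f' := by
      rw [hP'Ca] at *
      exact fun f hf f' hf' => elinked_mono (le_refl _) (hCaconn f hf f' hf')
    have hIH := IH P' hP'sub hconn' hP'ne
    obtain ⟨f, hfCa⟩ : Ca.Nonempty := hCane
    obtain ⟨g, hgCa, hg1, _⟩ := hCawit f hfCa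
    have he1 : e.1 ∈ P'.image Prod.fst :=
      Finset.mem_image.mpr ⟨g, hCaP' hgCa, hg1⟩
    obtain ⟨f', hfCb⟩ : Cb.Nonempty := hCbne
    obtain ⟨g', hgCb, hg2, _⟩ := hCbwit f' hfCb
    have he2 : e.2 ∈ P'.image Prod.snd :=
      Finset.mem_image.mpr ⟨g', hCbP' hgCb, hg2⟩
    have hc1 : (P.image Prod.fst).card ≤ (P'.image Prod.fst).card := by
      rw [himgP]
      exact Finset.card_le_card (Finset.insert_subset he1 (le_refl _))
    have hc2 : (P.image Prod.snd).card ≤ (P'.image Prod.snd).card := by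
      rw [himgPs]
      exact Finset.card_le_card (Finset.insert_subset he2 (le_refl _))
    have hcP : P.card = P'.card + 1 := by
      rw [hPP']
      exact Finset.card_insert_of_notMem (Finset.notMem_erase e P)
    omega
  · -- disjoint components
    push_neg at hint
    have hdisj : Disjoint Ca Cb := by
      rw [Finset.disjoint_left]
      intro f hf hf'
      exact hint f hf hf'
    have hIHa := IH Ca (lt_of_le_of_lt hCaP' hP'sub) hCaconn hCane
    have hIHb := IH Cb (lt_of_le_of_lt hCbP' hP'sub) hCbconn hCbne
    obtain ⟨f, hfCa⟩ : Ca.Nonempty := hCane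
    obtain ⟨g, hgCa, hg1, _⟩ := hCawit f hfCa
    have he1 : e.1 ∈ Ca.image Prod.fst := Finset.mem_image.mpr ⟨g, hgCa, hg1⟩
    obtain ⟨f', hfCb⟩ : Cb.Nonempty := hCbne
    obtain ⟨g', hgCb, hg2, _⟩ := hCbwit f' hfCb
    have he2 : e.2 ∈ Cb.image Prod.snd := Finset.mem_image.mpr ⟨g', hgCb, hg2⟩
    have hc1 : (P.image Prod.fst).card ≤
        (Ca.image Prod.fst).card + (Cb.image Prod.fst).card := by
      calc (P.image Prod.fst).card
          ≤ ((Ca.image Prod.fst) ∪ (Cb.image Prod.fst)).card := by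
            apply Finset.card_le_card
            rw [himgP]
            apply Finset.insert_subset
            · exact Finset.mem_union_left _ he1
            · intro x hx
              obtain ⟨ff, hff, hffx⟩ := Finset.mem_image.mp hx
              rcases hcover ff hff with h | h
              · exact Finset.mem_union_left _ (Finset.mem_image.mpr ⟨ff, h, hffx⟩)
              · exact Finset.mem_union_right _ (Finset.mem_image.mpr ⟨ff, h, hffx⟩)
        _ ≤ _ := Finset.card_union_le _ _
    have hc2 : (P.image Prod.snd).card ≤
        (Ca.image Prod.snd).card + (Cb.image Prod.snd).card := by
      calc (P.image Prod.snd).card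
          ≤ ((Ca.image Prod.snd) ∪ (Cb.image Prod.snd)).card := by
            apply Finset.card_le_card
            rw [himgPs]
            apply Finset.insert_subset
            · exact Finset.mem_union_right _ he2
            · intro x hx
              obtain ⟨ff, hff, hffx⟩ := Finset.mem_image.mp hx
              rcases hcover ff hff with h | h
              · exact Finset.mem_union_left _ (Finset.mem_image.mpr ⟨ff, h, hffx⟩)
              · exact Finset.mem_union_right _ (Finset.mem_image.mpr ⟨ff, h, hffx⟩)
        _ ≤ _ := Finset.card_union_le _ _
    have hcards : Ca.card + Cb.card = P'.card := by
      rw [← Finset.card_union_of_disjoint hdisj]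
      congr 1
      apply Finset.Subset.antisymm
      · intro f hf
        rcases Finset.mem_union.mp hf with h | h
        · exact hCaP' h
        · exact hCbP' h
      · intro f hf
        rcases hcover f hf with h | h
        · exact Finset.mem_union_left _ h
        · exact Finset.mem_union_right _ h
    have hcP : P.card = P'.card + 1 := by
      rw [hPP']
      exact Finset.card_insert_of_notMem (Finset.notMem_erase e P)
    omega

lemma exists_split [DecidableEq α] [DecidableEq β] (P : Finset (α × β))
    (hne : P.Nonempty)
    (hcard : P.card + 2 ≤ (P.image Prod.fst).card + (P.image Prod.snd).card) :
    ∃ (CL : Set α) (CR : Set β),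
      (∀ e ∈ P, (e.1 ∈ CL ↔ e.2 ∈ CR)) ∧
      (∃ e ∈ P, e.1 ∈ CL ∧ e.2 ∈ CR) ∧
      (∃ e ∈ P, e.1 ∉ CL ∧ e.2 ∉ CR) := by
  have hnconn : ¬(∀ e ∈ P, ∀ f ∈ P, elinked P e f) := by
    intro hconn
    have := conn_card P hconn hne
    omega
  push_neg at hnconn
  obtain ⟨e₀, he₀, f₀, hf₀, hnl⟩ := hnconn
  refine ⟨{a | ∃ f ∈ P, f.1 = a ∧ elinked P e₀ f},
    {b | ∃ f ∈ P, f.2 = b ∧ elinked P e₀ f}, ?_, ?_, ?_⟩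
  · intro e heP
    constructor
    · rintro ⟨f, hfP, hf1, hlink⟩
      exact ⟨e, heP, rfl, hlink.tail ⟨hfP, heP, Or.inl hf1⟩⟩
    · rintro ⟨f, hfP, hf2, hlink⟩
      exact ⟨e, heP, rfl, hlink.tail ⟨hfP, heP, Or.inr hf2⟩⟩
  · exact ⟨e₀, he₀, ⟨e₀, he₀, rfl, Relation.ReflTransGen.refl⟩,
      ⟨e₀, he₀, rfl, Relation.ReflTransGen.refl⟩⟩
  · refine ⟨f₀, hf₀, ?_, ?_⟩
    · rintro ⟨f, hfP, hf1, hlink⟩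
      exact hnl (hlink.tail ⟨hfP, hf₀, Or.inl hf1⟩)
    · rintro ⟨f, hfP, hf2, hlink⟩
      exact hnl (hlink.tail ⟨hfP, hf₀, Or.inr hf2⟩)

end Graph

section Helpers
variable {A : Type*} {u : ℕ → A} {w : List A}

lemma gap_bound (hPR : PropertyR u 3) (hinf : {j | OccursAt u w j}.Infinite)
    (F : ℕ → Prop) (g : List A) (hfac : IsFactor u g)
    (hchar : ∀ p, OccursAt u g p ↔ ∃ n, p = occn u w n ∧ F n)
    (V : Set (List A)) (hVfin : V.Finite) (hV : V.ncard < 3)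
    (hnext : ∀ n, F n → ∃ m, 0 < m ∧ F (n + m) ∧
      (∀ l, 0 < l → l < m → ¬F (n + l)) ∧
      factorAt u (occn u w n) (occn u w (n + m) - occn u w n) ∈ V) : False := by
  have h3 := (hPR g hfac).2
  have hsub : returnWords u g ⊆ V := by
    rintro v ⟨j, k, hjk, hj, hk, hbet, rfl⟩
    obtain ⟨n, rfl, hFn⟩ := (hchar j).mp hj
    obtain ⟨n', rfl, hFn'⟩ := (hchar k).mp hk
    obtain ⟨m, hm0, hFm, hbet2, hmem⟩ := hnext n hFn
    have hnn' : n < n' := by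
      by_contra hc
      exact absurd (occn_le hinf (show n' ≤ n by omega)) (by omega)
    have heq : n + m = n' := by
      rcases Nat.lt_trichotomy (n + m) n' with hlt | heq | hgt
      · exact absurd ((hchar _).mpr ⟨n + m, rfl, hFm⟩)
          (hbet _ (occn_lt hinf (by omega)) (occn_lt hinf hlt))
      · exact heq
      · exact absurd hFn' (by
          have := hbet2 (n' - n) (by omega) (by omega)
          rwa [show n + (n' - n) = n' by omega] at this)
    rw [← heq]
    exact hmem
  have := Set.ncard_le_ncard hsub hVfin
  omega

lemma single_occ_kill (hPR : PropertyR u 3) (g : List A) (hfac : IsFactor u g)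
    (huniq : ∀ p q, OccursAt u g p → OccursAt u g q → p = q) : False := by
  have h3 := (hPR g hfac).2
  have hempty : returnWords u g = ∅ := by
    ext v
    simp only [Set.mem_empty_iff_false, iff_false]
    rintro ⟨j, k, hjk, hj, hk, _, _⟩
    exact absurd (huniq j k hj hk) (by omega)
  rw [hempty] at h3
  simp at h3

lemma ncard_pair_le (a b : List A) : ({a, b} : Set (List A)).ncard ≤ 2 := by
  refine le_trans (Set.ncard_insert_le _ _) ?_
  simp

end Helpers

lemma fin3_cases : ∀ i j k m : Fin 3, j ≠ i → k ≠ i → j ≠ k →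
    m = i ∨ m = j ∨ m = k := by decide

lemma dispatch : ∀ ic oc : Fin 3 → Bool,
    (∃ a b, ic a ≠ ic b) → (∃ a b, oc a ≠ oc b) →
    (∃ i, ∀ m, ic m = oc i → m = i) ∨
    (∃ i, ∀ m, oc m = ic i → m = i) ∨
    (∃ i j k, j ≠ i ∧ k ≠ i ∧ j ≠ k ∧ ic i ≠ oc i ∧
      (∀ m, ic m = oc j → m = i) ∧ (∀ m, ic m = oc k → m = i)) ∨
    (∃ i j k, j ≠ i ∧ k ≠ i ∧ j ≠ k ∧ ic j = oc i ∧ ic i ≠ oc i ∧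
      ic k ≠ oc i ∧ oc j ≠ ic j ∧ oc k ≠ ic j) := by decide

set_option maxHeartbeats 4000000 in
/-- If `u` satisfies property `R_3`, then `u` has no weak bispecial
factor. -/
theorem no_weakBispecial_of_propertyR_three [Fintype A] (u : ℕ → A)
    (h : PropertyR u 3) : ∀ w, ¬ WeakBispecial u w := by
  classical
  rintro w ⟨hw, hBneg⟩
  have hinf : {j | OccursAt u w j}.Infinite := occSet_infinite h hw
  obtain ⟨hRfin, hRcard⟩ := h w hw
  obtain ⟨x, y, z, hxy, hxz, hyz, hRset⟩ := Set.ncard_eq_three.mp hRcard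
  set ℓ : Fin 3 → List A := ![x, y, z] with hℓdef
  have hℓne : ∀ m m' : Fin 3, m ≠ m' → ℓ m ≠ ℓ m' := by
    intro m m' h1
    fin_cases m <;> fin_cases m' <;> simp_all [hℓdef] <;>
      first
        | exact hxy | exact hxz | exact hyz
        | exact fun e => hxy e.symm | exact fun e => hxz e.symm
        | exact fun e => hyz e.symm
  have hmemret : ∀ n, ∃ m : Fin 3, ℓ m = ret u w n := by
    intro n
    have hm := ret_mem hinf n
    rw [hRset] at hm
    simp only [Set.mem_insert_iff, Set.mem_singleton_iff] at hm
    rcases hm with h1 | h1 | h1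
    · exact ⟨0, by simp [hℓdef, h1]⟩
    · exact ⟨1, by simp [hℓdef, h1]⟩
    · exact ⟨2, by simp [hℓdef, h1]⟩
  have hℓmem : ∀ m : Fin 3, ℓ m ∈ returnWords u w := by
    intro m
    rw [hRset]
    fin_cases m <;> simp [hℓdef]
  have hinfm : ∀ (m : Fin 3) (N : ℕ), ∃ n, N < n ∧ ret u w n = ℓ m :=
    fun m N => ret_inf hinf h (hℓmem m) N
  have hweak : (extPairs u w).ncard + 2 ≤
      (leftExt u w).ncard + (rightExt u w).ncard := by
    unfold bilateralOrder at hBneg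
    omega
  have hpair : ∀ n, (Af u (ret u w n), Bf u w (ret u w (n+1))) ∈ extPairs u w :=
    fun n => pair_mem hinf n
  have hPsub : ∀ e ∈ extPairs u w,
      ∃ n, Af u (ret u w n) = e.1 ∧ Bf u w (ret u w (n+1)) = e.2 := by
    rintro ⟨a, b⟩ he
    obtain ⟨q, hq1, hq2⟩ := exists_occ_gt h he (occn u w 0)
    rcases (occLR hinf).mp hq2 with ⟨he1, _, _⟩ | ⟨n, hn, ha, hb⟩
    · omega
    · exact ⟨n, ha, hb⟩
  have hLmem : ∀ n, Af u (ret u w n) ∈ leftExt u w :=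
    fun n => ⟨occn u w (n+1) - 1, aw_occurs hinf n⟩
  have hRmem : ∀ n, Bf u w (ret u w n) ∈ rightExt u w :=
    fun n => ⟨occn u w n, wb_occurs hinf n⟩
  have hLsub : ∀ a ∈ leftExt u w, ∃ n, Af u (ret u w n) = a := by
    intro a ha
    obtain ⟨q, hq1, hq2⟩ := exists_occ_gt h ha (occn u w 0)
    rcases (occL hinf).mp hq2 with ⟨he1, _⟩ | ⟨n, hn, hA⟩
    · omega
    · exact ⟨n, hA⟩
  have hRsub : ∀ b ∈ rightExt u w, ∃ n, Bf u w (ret u w n) = b := by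
    intro b hb
    obtain ⟨q, hq⟩ := hb
    obtain ⟨n, hn, hB⟩ := (occR hinf).mp hq
    exact ⟨n, hB⟩
  -- L and R as coordinate images of P
  have hLeq : leftExt u w = Prod.fst '' extPairs u w := by
    apply Set.Subset.antisymm
    · intro a ha
      obtain ⟨n, hn⟩ := hLsub a ha
      exact ⟨(Af u (ret u w n), Bf u w (ret u w (n+1))), hpair n, hn⟩
    · rintro a ⟨⟨a', b⟩, he, rfl⟩
      obtain ⟨p, hp⟩ := he
      have hp' : OccursAt u ((a' :: w) ++ [b]) p := hp
      exact ⟨p, (occursAt_append.mp hp').1⟩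
  have hReq : rightExt u w = Prod.snd '' extPairs u w := by
    apply Set.Subset.antisymm
    · intro b hb
      obtain ⟨q, hq1, hq2⟩ := exists_occ_gt h hb (occn u w 0)
      obtain ⟨n, hn, hB⟩ := (occR hinf).mp hq2
      match n, hn, hB with
      | 0, hn, hB => exact absurd hn (by omega)
      | (n+1), hn, hB =>
        exact ⟨(Af u (ret u w n), b), by
          have := hpair n; rwa [hB] at this, rfl⟩
    · rintro b ⟨⟨a, b'⟩, he, rfl⟩
      obtain ⟨p, hp⟩ := he
      exact ⟨p + 1, (occursAt_cons.mp hp).2⟩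
  -- pass to a Finset and split
  have hPfin : (extPairs u w).Finite := Set.toFinite _
  set Pf := hPfin.toFinset with hPfdef
  have hPfne : Pf.Nonempty := ⟨_, hPfin.mem_toFinset.mpr (hpair 0)⟩
  have hsplitcard : Pf.card + 2 ≤
      (Pf.image Prod.fst).card + (Pf.image Prod.snd).card := by
    have e1 : Pf.card = (extPairs u w).ncard := by
      rw [← Set.ncard_coe_finset, hPfin.coe_toFinset]
    have e2 : (Pf.image Prod.fst).card = (leftExt u w).ncard := by
      rw [← Set.ncard_coe_finset, Finset.coe_image, hPfin.coe_toFinset, ← hLeq]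
    have e3 : (Pf.image Prod.snd).card = (rightExt u w).ncard := by
      rw [← Set.ncard_coe_finset, Finset.coe_image, hPfin.coe_toFinset, ← hReq]
    omega
  obtain ⟨CL, CR, hcompat0, ⟨epos, heposP, hepos1, hepos2⟩,
    ⟨eneg, henegP, heneg1, heneg2⟩⟩ := exists_split Pf hPfne hsplitcard
  have hcompat : ∀ a b, (a, b) ∈ extPairs u w → (a ∈ CL ↔ b ∈ CR) :=
    fun a b hab => hcompat0 (a, b) (hPfin.mem_toFinset.mpr hab)
  -- boolean colours on the three letters
  set icb : Fin 3 → Bool := fun m => decide (Bf u w (ℓ m) ∈ CR) with hicb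
  set ocb : Fin 3 → Bool := fun m => decide (Af u (ℓ m) ∈ CL) with hocb
  have hadj : ∀ (n : ℕ) (m m' : Fin 3), ℓ m = ret u w n → ℓ m' = ret u w (n+1) →
      ocb m = icb m' := by
    intro n m m' hm hm'
    have hiff := hcompat _ _ (hpair n)
    rw [← hm, ← hm'] at hiff
    simp only [hicb, hocb]
    exact decide_eq_decide.mpr hiff
  have hicBf : ∀ m m' : Fin 3, Bf u w (ℓ m) = Bf u w (ℓ m') → icb m = icb m' := by
    intro m m' hB
    simp only [hicb, hB]
  have hocAf : ∀ m m' : Fin 3, Af u (ℓ m) = Af u (ℓ m') → ocb m = ocb m' := by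
    intro m m' hA
    simp only [hocb, hA]
  -- onto-ness of the colours
  have hic_onto : ∃ a b, icb a ≠ icb b := by
    have hbpos : epos.2 ∈ rightExt u w := by
      rw [hReq]
      exact ⟨epos, hPfin.mem_toFinset.mp heposP, rfl⟩
    have hbneg : eneg.2 ∈ rightExt u w := by
      rw [hReq]
      exact ⟨eneg, hPfin.mem_toFinset.mp henegP, rfl⟩
    obtain ⟨n1, hn1⟩ := hRsub _ hbpos
    obtain ⟨n2, hn2⟩ := hRsub _ hbneg
    obtain ⟨m1, hm1⟩ := hmemret n1
    obtain ⟨m2, hm2⟩ := hmemret n2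
    refine ⟨m1, m2, ?_⟩
    have e1 : icb m1 = true := by
      simp only [hicb, decide_eq_true_eq]
      rw [hm1, hn1]; exact hepos2
    have e2 : icb m2 = false := by
      simp only [hicb, decide_eq_false_iff_not]
      rw [hm2, hn2]; exact heneg2
    rw [e1, e2]; simp
  have hoc_onto : ∃ a b, ocb a ≠ ocb b := by
    have hapos : epos.1 ∈ leftExt u w := by
      rw [hLeq]
      exact ⟨epos, hPfin.mem_toFinset.mp heposP, rfl⟩
    have haneg : eneg.1 ∈ leftExt u w := by
      rw [hLeq]
      exact ⟨eneg, hPfin.mem_toFinset.mp henegP, rfl⟩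
    obtain ⟨n1, hn1⟩ := hLsub _ hapos
    obtain ⟨n2, hn2⟩ := hLsub _ haneg
    obtain ⟨m1, hm1⟩ := hmemret n1
    obtain ⟨m2, hm2⟩ := hmemret n2
    refine ⟨m1, m2, ?_⟩
    have e1 : ocb m1 = true := by
      simp only [hocb, decide_eq_true_eq]
      rw [hm1, hn1]; exact hepos1
    have e2 : ocb m2 = false := by
      simp only [hocb, decide_eq_false_iff_not]
      rw [hm2, hn2]; exact heneg1
    rw [e1, e2]; simp
  -- dispatch on the colour pattern
  rcases dispatch icb ocb hic_onto hoc_onto with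
    ⟨i, hI⟩ | ⟨i, hI'⟩ |
    ⟨i, j, k, hji, hki, hjk', hne, hsj, hsk⟩ |
    ⟨i, j, k, hji, hki, hjk', hc1, hc2, hc3, hc4, hc5⟩
  · -- Pattern I : after letter i always comes i
    obtain ⟨n₀, -, hn₀⟩ := hinfm i 0
    have hstep : ∀ n, ret u w n = ℓ i → ret u w (n+1) = ℓ i := by
      intro n hn
      obtain ⟨m', hm'⟩ := hmemret (n+1)
      have hmi : m' = i := hI m' (hadj n i m' hn.symm hm').symm
      rw [← hm', hmi]
    refine gap_bound h hinf (fun n => ret u w n = ℓ i) (ℓ i ++ w)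
      ⟨occn u w n₀, by rw [← hn₀]; exact retw_occurs hinf n₀⟩
      (fun p => occT hinf hn₀) {ℓ i} (Set.finite_singleton _)
      (by rw [Set.ncard_singleton]; omega) ?_
    intro n hFn
    refine ⟨1, one_pos, hstep n hFn, by intro l h1 h2; omega, ?_⟩
    have hrp : factorAt u (occn u w n) (occn u w (n+1) - occn u w n) = ret u w n := rfl
    rw [hrp, hFn]
    simp
  · -- Pattern I' : before letter i always comes i
    obtain ⟨n₀, -, hn₀⟩ := hinfm i 0
    have hstep' : ∀ n, ret u w (n+1) = ℓ i → ret u w n = ℓ i := by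
      intro n hn
      obtain ⟨m, hm⟩ := hmemret n
      have hmi : m = i := hI' m (hadj n m i hm hn.symm)
      rw [← hm, hmi]
    refine gap_bound h hinf (fun n => ret u w n = ℓ i) (ℓ i ++ w)
      ⟨occn u w n₀, by rw [← hn₀]; exact retw_occurs hinf n₀⟩
      (fun p => occT hinf hn₀) {ℓ i} (Set.finite_singleton _)
      (by rw [Set.ncard_singleton]; omega) ?_
    intro n hFn
    obtain ⟨n', hn'1, hn'2⟩ := hinfm i n
    have hex : ∃ c, 0 < c ∧ ret u w (n + c) = ℓ i :=
      ⟨n' - n, by omega, by rw [show n + (n' - n) = n' by omega]; exact hn'2⟩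
    obtain ⟨hc0, hcF⟩ := Nat.find_spec hex
    have hc1 : Nat.find hex = 1 := by
      by_contra hcne
      have hc2 : 2 ≤ Nat.find hex := by omega
      have hprev := hstep' (n + Nat.find hex - 1)
        (by rw [show n + Nat.find hex - 1 + 1 = n + Nat.find hex by omega]; exact hcF)
      exact Nat.find_min hex (show Nat.find hex - 1 < Nat.find hex by omega)
        ⟨by omega, by rwa [show n + (Nat.find hex - 1) = n + Nat.find hex - 1 by omega]⟩
    refine ⟨1, one_pos, by rw [show n + 1 = n + Nat.find hex by omega]; exact hcF,
      by intro l h1 h2; omega, ?_⟩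
    have hrp : factorAt u (occn u w n) (occn u w (n+1) - occn u w n) = ret u w n := rfl
    rw [hrp, hFn]
    simp
  · -- Pattern II
    obtain ⟨n₀, -, hn₀⟩ := hinfm i 0
    have hstepj : ∀ n, ret u w n = ℓ j → ret u w (n+1) = ℓ i := by
      intro n hn
      obtain ⟨m', hm'⟩ := hmemret (n+1)
      have hmi : m' = i := hsj m' (hadj n j m' hn.symm hm').symm
      rw [← hm', hmi]
    have hstepk : ∀ n, ret u w n = ℓ k → ret u w (n+1) = ℓ i := by
      intro n hn
      obtain ⟨m', hm'⟩ := hmemret (n+1)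
      have hmi : m' = i := hsk m' (hadj n k m' hn.symm hm').symm
      rw [← hm', hmi]
    have hstepi : ∀ n, ret u w n = ℓ i → ret u w (n+1) = ℓ j ∨ ret u w (n+1) = ℓ k := by
      intro n hn
      obtain ⟨m', hm'⟩ := hmemret (n+1)
      have hadj' := hadj n i m' hn.symm hm'
      rcases fin3_cases i j k m' hji hki hjk' with e|e|e
      · exfalso; rw [e] at hadj'; exact hne hadj'.symm
      · left; rw [← hm', e]
      · right; rw [← hm', e]
    refine gap_bound h hinf (fun n => ret u w n = ℓ i) (ℓ i ++ w)
      ⟨occn u w n₀, by rw [← hn₀]; exact retw_occurs hinf n₀⟩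
      (fun p => occT hinf hn₀) {ℓ i ++ ℓ j, ℓ i ++ ℓ k} (Set.toFinite _)
      (by have := ncard_pair_le (ℓ i ++ ℓ j) (ℓ i ++ ℓ k); omega) ?_
    intro n hFn
    have h2w : factorAt u (occn u w n) (occn u w (n+2) - occn u w n) =
        ret u w n ++ ret u w (n+1) := factorAt_two hinf n
    rcases hstepi n hFn with hj1 | hk1
    · refine ⟨2, by omega, hstepj (n+1) hj1, ?_, ?_⟩
      · intro l h1 h2 hE
        rw [show n + l = n + 1 by omega, hj1] at hE
        exact hℓne j i hji hE
      · rw [h2w, hFn, hj1]; simp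
    · refine ⟨2, by omega, hstepk (n+1) hk1, ?_, ?_⟩
      · intro l h1 h2 hE
        rw [show n + l = n + 1 by omega, hk1] at hE
        exact hℓne k i hki hE
      · rw [h2w, hFn, hk1]; simp
  · -- Pattern III
    have H1 : ∀ n, ret u w n = ℓ i → ret u w (n+1) = ℓ j := by
      intro n hn
      obtain ⟨m', hm'⟩ := hmemret (n+1)
      have hadj' := hadj n i m' hn.symm hm'
      rcases fin3_cases i j k m' hji hki hjk' with e|e|e
      · exfalso; rw [e] at hadj'; exact hc2 hadj'.symm
      · rw [← hm', e]
      · exfalso; rw [e] at hadj'; exact hc3 hadj'.symm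
    have H2 : ∀ n, ret u w n = ℓ j → ret u w (n+1) = ℓ i ∨ ret u w (n+1) = ℓ k := by
      intro n hn
      obtain ⟨m', hm'⟩ := hmemret (n+1)
      have hadj' := hadj n j m' hn.symm hm'
      rcases fin3_cases i j k m' hji hki hjk' with e|e|e
      · left; rw [← hm', e]
      · exfalso; rw [e] at hadj'; exact hc4 hadj'
      · right; rw [← hm', e]
    have H3 : ∀ n, ret u w n = ℓ k → ret u w (n+1) = ℓ i ∨ ret u w (n+1) = ℓ k := by
      intro n hn
      obtain ⟨m', hm'⟩ := hmemret (n+1)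
      have hadj' := hadj n k m' hn.symm hm'
      rcases fin3_cases i j k m' hji hki hjk' with e|e|e
      · left; rw [← hm', e]
      · exfalso; rw [e] at hadj'; exact hc5 hadj'
      · right; rw [← hm', e]
    have hij : ℓ i ≠ ℓ j := hℓne i j (fun e => hji e.symm)
    have hik : ℓ i ≠ ℓ k := hℓne i k (fun e => hki e.symm)
    have hjk2 : ℓ j ≠ ℓ k := hℓne j k hjk'
    have hji2 : ℓ j ≠ ℓ i := hℓne j i hji
    have hki2 : ℓ k ≠ ℓ i := hℓne k i hki
    have hkj2 : ℓ k ≠ ℓ j := fun e => hjk2 e.symm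
    have H5a : Bf u w (ℓ j) ≠ Bf u w (ℓ i) := by
      intro e
      exact hc2 (by rw [← hicBf j i e]; exact hc1)
    have H5b : Bf u w (ℓ j) ≠ Bf u w (ℓ k) := by
      intro e
      exact hc3 (by rw [← hicBf j k e]; exact hc1)
    have H6a : Af u (ℓ i) ≠ Af u (ℓ j) := by
      intro e
      exact hc4 (by rw [← hocAf i j e]; exact hc1.symm)
    have H6b : Af u (ℓ i) ≠ Af u (ℓ k) := by
      intro e
      exact hc5 (by rw [← hocAf i k e]; exact hc1.symm)
    by_cases hbik : Bf u w (ℓ i) = Bf u w (ℓ k)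
    · -- III.1
      obtain ⟨n₀, -, hn₀⟩ := hinfm i 0
      have hfacg : IsFactor u (w ++ [Bf u w (ℓ i)]) := by
        refine ⟨occn u w n₀, ?_⟩
        have := wb_occurs hinf n₀
        rwa [hn₀] at this
      refine gap_bound h hinf (fun n => ret u w n = ℓ i ∨ ret u w n = ℓ k)
        (w ++ [Bf u w (ℓ i)]) hfacg ?_ {ℓ k, ℓ i ++ ℓ j} (Set.toFinite _)
        (by have := ncard_pair_le (ℓ k) (ℓ i ++ ℓ j); omega) ?_
      · intro p
        rw [occR hinf]
        constructor
        · rintro ⟨n, rfl, hB⟩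
          refine ⟨n, rfl, ?_⟩
          obtain ⟨m, hm⟩ := hmemret n
          rcases fin3_cases i j k m hji hki hjk' with e|e|e
          · left; rw [← hm, e]
          · exfalso; rw [e] at hm; rw [← hm] at hB; exact H5a hB
          · right; rw [← hm, e]
        · rintro ⟨n, rfl, hF⟩
          refine ⟨n, rfl, ?_⟩
          rcases hF with hF | hF
          · rw [hF]
          · rw [hF, ← hbik]
      · intro n hFn
        rcases hFn with hi1 | hk1
        · have hj1 : ret u w (n+1) = ℓ j := H1 n hi1
          have hF2 : ret u w (n+2) = ℓ i ∨ ret u w (n+2) = ℓ k := H2 (n+1) hj1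
          refine ⟨2, by omega, hF2, ?_, ?_⟩
          · intro l h1 h2 hE
            rw [show n + l = n + 1 by omega, hj1] at hE
            rcases hE with hE | hE
            · exact hℓne j i hji hE
            · exact hℓne j k hjk' hE
          · rw [factorAt_two hinf n, hi1, hj1]; simp
        · have hF1 := H3 n hk1
          refine ⟨1, one_pos, hF1, by intro l h1 h2; omega, ?_⟩
          have hrp : factorAt u (occn u w n) (occn u w (n+1) - occn u w n) = ret u w n := rfl
          rw [hrp, hk1]; simp
    by_cases hajk : Af u (ℓ j) = Af u (ℓ k)
    · -- III.2
      have hAiff : ∀ n, Af u (ret u w n) = Af u (ℓ j) ↔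
          (ret u w n = ℓ j ∨ ret u w n = ℓ k) := by
        intro n
        constructor
        · intro hA
          obtain ⟨m, hm⟩ := hmemret n
          rcases fin3_cases i j k m hji hki hjk' with e|e|e
          · exfalso; rw [e] at hm; rw [← hm] at hA; exact H6a hA
          · left; rw [← hm, e]
          · right; rw [← hm, e]
        · intro hF
          rcases hF with hF | hF
          · rw [hF]
          · rw [hF, ← hajk]
      by_cases hexc : 1 ≤ occn u w 0 ∧ u (occn u w 0 - 1) = Af u (ℓ j) ∧
          ret u w 0 = ℓ j
      · -- the factor (Af ℓj) w (Bf ℓj) occurs exactly once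
        obtain ⟨hex1, hex2, hex3⟩ := hexc
        refine single_occ_kill h (Af u (ℓ j) :: (w ++ [Bf u w (ℓ j)]))
          ⟨occn u w 0 - 1, ?_⟩ ?_
        · rw [occursAt_cons]
          refine ⟨hex2, ?_⟩
          rw [show occn u w 0 - 1 + 1 = occn u w 0 by omega, ← hex3]
          exact wb_occurs hinf 0
        · have huniq : ∀ r, OccursAt u (Af u (ℓ j) :: (w ++ [Bf u w (ℓ j)])) r →
              r = occn u w 0 - 1 := by
            intro r hr
            rcases (occLR hinf).mp hr with ⟨h1, -, -⟩ | ⟨n, hn, hA, hB⟩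
            · omega
            · exfalso
              have hgood : ret u w n = ℓ j ∨ ret u w n = ℓ k := (hAiff n).mp hA
              obtain ⟨m1, hm1⟩ := hmemret (n+1)
              have hbj : ret u w (n+1) = ℓ j := by
                rcases fin3_cases i j k m1 hji hki hjk' with e|e|e
                · exfalso; rw [e] at hm1; rw [← hm1] at hB; exact H5a hB.symm
                · rw [← hm1, e]
                · exfalso; rw [e] at hm1; rw [← hm1] at hB; exact H5b hB.symm
              rcases hgood with hg | hg
              · rcases H2 n hg with hh | hh
                · rw [hbj] at hh; exact hji2 hh
                · rw [hbj] at hh; exact hjk2 hh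
              · rcases H3 n hg with hh | hh
                · rw [hbj] at hh; exact hji2 hh
                · rw [hbj] at hh; exact hjk2 hh
          intro p q hp hq
          rw [huniq p hp, huniq q hq]
      · -- bound the return words of (Af ℓj) :: w
        obtain ⟨n₀j, -, hn₀j⟩ := hinfm j 0
        have hfacg : IsFactor u (Af u (ℓ j) :: w) := by
          refine ⟨occn u w (n₀j+1) - 1, ?_⟩
          have := aw_occurs hinf n₀j
          rwa [hn₀j] at this
        have hshift1 : ∀ l, 1 ≤ occn u w l →
            factorAt u (occn u w l - 1) (occn u w (l+1) - occn u w l) =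
              u (occn u w l - 1) :: (ret u w l).dropLast := by
          intro l hl
          have hlt := occn_succ_lt hinf l
          rw [show occn u w (l+1) - occn u w l =
              (occn u w (l+1) - occn u w l - 1) + 1 by omega,
            factorAt_succ, show occn u w l - 1 + 1 = occn u w l by omega]
          congr 1
          have hdl : (ret u w l).dropLast =
              factorAt u (occn u w l) (occn u w (l+1) - occn u w l - 1) := by
            show (factorAt u (occn u w l) (occn u w (l+1) - occn u w l)).dropLast = _
            rw [factorAt_dropLast]
          rw [hdl]
        have hshift2 : ∀ l, 1 ≤ occn u w l →
            factorAt u (occn u w l - 1) (occn u w (l+2) - occn u w l) =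
              u (occn u w l - 1) :: (ret u w l ++ ret u w (l+1)).dropLast := by
          intro l hl
          have hlt := occn_succ_lt hinf l
          have hlt2 : occn u w (l+1) < occn u w (l+2) := occn_lt hinf (by omega)
          rw [show occn u w (l+2) - occn u w l =
              (occn u w (l+2) - occn u w l - 1) + 1 by omega,
            factorAt_succ, show occn u w l - 1 + 1 = occn u w l by omega]
          congr 1
          rw [← factorAt_two hinf l, factorAt_dropLast]
        have hgoodocc : ∀ n, (ret u w n = ℓ j ∨ ret u w n = ℓ k) →
            OccursAt u (Af u (ℓ j) :: w) (occn u w (n+1) - 1) := by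
          intro n hF
          have hA : Af u (ret u w n) = Af u (ℓ j) := (hAiff n).mpr hF
          have := aw_occurs hinf n
          rwa [hA] at this
        have hsub : returnWords u (Af u (ℓ j) :: w) ⊆
            {Af u (ℓ j) :: (ℓ k).dropLast, Af u (ℓ j) :: (ℓ i ++ ℓ j).dropLast} := by
          rintro v ⟨p, q, hpq, hp, hq, hbet, rfl⟩
          have hqchar := (occL hinf).mp hq
          rcases (occL hinf).mp hp with ⟨hp1, hp2⟩ | ⟨n, hpn, hA⟩
          · -- p is the exceptional occurrence
            have h01 : 1 ≤ occn u w 0 := by omega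
            have hr0 : ret u w 0 ≠ ℓ j := fun e =>
              hexc ⟨h01, by rw [show occn u w 0 - 1 = p by omega]; exact hp2, e⟩
            obtain ⟨m0, hm0⟩ := hmemret 0
            have hcases0 : ret u w 0 = ℓ i ∨ ret u w 0 = ℓ k := by
              rcases fin3_cases i j k m0 hji hki hjk' with e|e|e
              · left; rw [← hm0, e]
              · exact absurd (by rw [← hm0, e] : ret u w 0 = ℓ j) hr0
              · right; rw [← hm0, e]
            rcases hcases0 with h0i | h0k
            · -- v = Af ℓj :: (ℓ i ++ ℓ j).dropLast
              have h1j : ret u w 1 = ℓ j := H1 0 h0i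
              have hocc2 : OccursAt u (Af u (ℓ j) :: w) (occn u w 2 - 1) :=
                hgoodocc 1 (Or.inl h1j)
              have g1 : occn u w 0 < occn u w 2 := occn_lt hinf (by omega)
              have g2 : occn u w 0 < occn u w 1 := occn_lt hinf (by omega)
              have g3 : occn u w 1 < occn u w 2 := occn_lt hinf (by omega)
              have hlt2 : p < occn u w 2 - 1 := by omega
              have hqle : q ≤ occn u w 2 - 1 := by
                by_contra hc
                exact hbet _ hlt2 (by omega) hocc2
              have hqge : occn u w 2 - 1 ≤ q := by
                rcases hqchar with ⟨hq1, hq2⟩ | ⟨n', hqn', hA'⟩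
                · omega
                · have hn'1 : n' ≠ 0 := by
                    intro e
                    rw [e] at hA'
                    rcases (hAiff 0).mp hA' with hh | hh
                    · exact hr0 hh
                    · rw [h0i] at hh; exact hik hh
                  have : occn u w 2 ≤ occn u w (n'+1) := occn_le hinf (by omega)
                  omega
              have hqeq : q = occn u w 2 - 1 := le_antisymm hqle hqge
              have hkey : factorAt u p (q - p) =
                  u (occn u w 0 - 1) :: (ret u w 0 ++ ret u w 1).dropLast := by
                have h2 := hshift2 0 h01
                rw [show (0:ℕ)+2 = 2 from rfl, show (0:ℕ)+1 = 1 from rfl] at h2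
                rw [show p = occn u w 0 - 1 by omega,
                  show q - (occn u w 0 - 1) = occn u w 2 - occn u w 0 by omega]
                exact h2
              rw [hkey, show u (occn u w 0 - 1) = Af u (ℓ j) from by
                  rw [show occn u w 0 - 1 = p by omega]; exact hp2,
                h0i, h1j]
              simp
            · -- v = Af ℓj :: (ℓ k).dropLast
              have hocc1 : OccursAt u (Af u (ℓ j) :: w) (occn u w 1 - 1) :=
                hgoodocc 0 (Or.inr h0k)
              have g2 : occn u w 0 < occn u w 1 := occn_lt hinf (by omega)
              have hlt1 : p < occn u w 1 - 1 := by omega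
              have hqle : q ≤ occn u w 1 - 1 := by
                by_contra hc
                exact hbet _ hlt1 (by omega) hocc1
              have hqge : occn u w 1 - 1 ≤ q := by
                rcases hqchar with ⟨hq1, hq2⟩ | ⟨n', hqn', hA'⟩
                · omega
                · have : occn u w 1 ≤ occn u w (n'+1) := occn_le hinf (by omega)
                  omega
              have hqeq : q = occn u w 1 - 1 := le_antisymm hqle hqge
              have hkey : factorAt u p (q - p) =
                  u (occn u w 0 - 1) :: (ret u w 0).dropLast := by
                have h1 := hshift1 0 h01
                rw [show (0:ℕ)+1 = 1 from rfl] at h1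
                rw [show p = occn u w 0 - 1 by omega,
                  show q - (occn u w 0 - 1) = occn u w 1 - occn u w 0 by omega]
                exact h1
              rw [hkey, show u (occn u w 0 - 1) = Af u (ℓ j) from by
                  rw [show occn u w 0 - 1 = p by omega]; exact hp2, h0k]
              simp
          · -- p is a good occurrence
            have hFn := (hAiff n).mp hA
            have h1n : 1 ≤ occn u w (n+1) := by
              have := occn_succ_lt hinf n; omega
            have hupA : u p = Af u (ℓ j) := by
              rw [hpn, u_Af hinf n]; exact hA
            have hnext1 : ret u w (n+1) = ℓ i ∨ ret u w (n+1) = ℓ k := by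
              rcases hFn with hF | hF
              · exact H2 n hF
              · exact H3 n hF
            rcases hnext1 with hni | hnk
            · -- v = Af ℓj :: (ℓ i ++ ℓ j).dropLast
              have hj2 : ret u w (n+2) = ℓ j := by
                have := H1 (n+1) hni
                rwa [show n+1+1 = n+2 from rfl] at this
              have hocc3 : OccursAt u (Af u (ℓ j) :: w) (occn u w (n+3) - 1) := by
                have := hgoodocc (n+2) (Or.inl hj2)
                rwa [show n+2+1 = n+3 from rfl] at this
              have g1 : occn u w (n+1) < occn u w (n+3) := occn_lt hinf (by omega)
              have g2 : occn u w (n+1) < occn u w (n+2) := occn_lt hinf (by omega)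
              have g3 : occn u w (n+2) < occn u w (n+3) := occn_lt hinf (by omega)
              have hlt3 : p < occn u w (n+3) - 1 := by omega
              have hqle : q ≤ occn u w (n+3) - 1 := by
                by_contra hc
                exact hbet _ hlt3 (by omega) hocc3
              have hqge : occn u w (n+3) - 1 ≤ q := by
                rcases hqchar with ⟨hq1, hq2⟩ | ⟨n', hqn', hA'⟩
                · have : occn u w 0 ≤ occn u w (n+1) := occn_le hinf (by omega)
                  omega
                · have hgt : n < n' := by
                    by_contra hc
                    have : occn u w (n'+1) ≤ occn u w (n+1) := occn_le hinf (by omega)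
                    omega
                  have hne1 : n' ≠ n+1 := by
                    intro e
                    rw [e] at hA'
                    rcases (hAiff (n+1)).mp hA' with hh | hh
                    · rw [hni] at hh; exact hij hh
                    · rw [hni] at hh; exact hik hh
                  have : occn u w (n+3) ≤ occn u w (n'+1) := occn_le hinf (by omega)
                  omega
              have hqeq : q = occn u w (n+3) - 1 := le_antisymm hqle hqge
              have hkey : factorAt u p (q - p) =
                  u (occn u w (n+1) - 1) ::
                    (ret u w (n+1) ++ ret u w (n+2)).dropLast := by
                have h2 := hshift2 (n+1) h1n
                rw [show n+1+2 = n+3 from rfl, show n+1+1 = n+2 from rfl] at h2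
                rw [hpn, show q - (occn u w (n+1) - 1) =
                  occn u w (n+3) - occn u w (n+1) by omega]
                exact h2
              rw [hkey, show u (occn u w (n+1) - 1) = Af u (ℓ j) from by
                  rw [← hpn]; exact hupA,
                hni, hj2]
              simp
            · -- v = Af ℓj :: (ℓ k).dropLast
              have hocc2 : OccursAt u (Af u (ℓ j) :: w) (occn u w (n+2) - 1) := by
                have := hgoodocc (n+1) (Or.inr hnk)
                rwa [show n+1+1 = n+2 from rfl] at this
              have g2 : occn u w (n+1) < occn u w (n+2) := occn_lt hinf (by omega)
              have hlt2 : p < occn u w (n+2) - 1 := by omega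
              have hqle : q ≤ occn u w (n+2) - 1 := by
                by_contra hc
                exact hbet _ hlt2 (by omega) hocc2
              have hqge : occn u w (n+2) - 1 ≤ q := by
                rcases hqchar with ⟨hq1, hq2⟩ | ⟨n', hqn', hA'⟩
                · have : occn u w 0 ≤ occn u w (n+1) := occn_le hinf (by omega)
                  omega
                · have hgt : n < n' := by
                    by_contra hc
                    have : occn u w (n'+1) ≤ occn u w (n+1) := occn_le hinf (by omega)
                    omega
                  have : occn u w (n+2) ≤ occn u w (n'+1) := occn_le hinf (by omega)
                  omega
              have hqeq : q = occn u w (n+2) - 1 := le_antisymm hqle hqge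
              have hkey : factorAt u p (q - p) =
                  u (occn u w (n+1) - 1) :: (ret u w (n+1)).dropLast := by
                have h1 := hshift1 (n+1) h1n
                rw [show n+1+1 = n+2 from rfl] at h1
                rw [hpn, show q - (occn u w (n+1) - 1) =
                  occn u w (n+2) - occn u w (n+1) by omega]
                exact h1
              rw [hkey, show u (occn u w (n+1) - 1) = Af u (ℓ j) from by
                  rw [← hpn]; exact hupA, hnk]
              simp
        have h3 := (h (Af u (ℓ j) :: w) hfacg).2
        have hle := Set.ncard_le_ncard hsub (Set.toFinite _)
        have hpl := ncard_pair_le (Af u (ℓ j) :: (ℓ k).dropLast)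
          (Af u (ℓ j) :: (ℓ i ++ ℓ j).dropLast)
        omega
    · -- III.3
      have hReq3 : rightExt u w = {Bf u w (ℓ i), Bf u w (ℓ j), Bf u w (ℓ k)} := by
        apply Set.Subset.antisymm
        · intro b hb
          obtain ⟨n, hn⟩ := hRsub b hb
          obtain ⟨m, hm⟩ := hmemret n
          rcases fin3_cases i j k m hji hki hjk' with e|e|e <;>
            rw [e] at hm <;> rw [← hn, ← hm] <;> simp
        · intro b hb
          simp only [Set.mem_insert_iff, Set.mem_singleton_iff] at hb
          rcases hb with rfl | rfl | rfl
          · obtain ⟨n, -, hn⟩ := hinfm i 0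
            have := hRmem n; rwa [hn] at this
          · obtain ⟨n, -, hn⟩ := hinfm j 0
            have := hRmem n; rwa [hn] at this
          · obtain ⟨n, -, hn⟩ := hinfm k 0
            have := hRmem n; rwa [hn] at this
      have hLeq3 : leftExt u w = {Af u (ℓ i), Af u (ℓ j), Af u (ℓ k)} := by
        apply Set.Subset.antisymm
        · intro a ha
          obtain ⟨n, hn⟩ := hLsub a ha
          obtain ⟨m, hm⟩ := hmemret n
          rcases fin3_cases i j k m hji hki hjk' with e|e|e <;>
            rw [e] at hm <;> rw [← hn, ← hm] <;> simp
        · intro a ha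
          simp only [Set.mem_insert_iff, Set.mem_singleton_iff] at ha
          rcases ha with rfl | rfl | rfl
          · obtain ⟨n, -, hn⟩ := hinfm i 0
            have := hLmem n; rwa [hn] at this
          · obtain ⟨n, -, hn⟩ := hinfm j 0
            have := hLmem n; rwa [hn] at this
          · obtain ⟨n, -, hn⟩ := hinfm k 0
            have := hLmem n; rwa [hn] at this
      have hLc : (leftExt u w).ncard = 3 := by
        rw [hLeq3]
        exact Set.ncard_eq_three.mpr ⟨_, _, _, H6a, H6b, hajk, rfl⟩
      have hRc : (rightExt u w).ncard = 3 := by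
        rw [hReq3]
        exact Set.ncard_eq_three.mpr ⟨_, _, _, fun e => H5a e.symm, hbik, H5b, rfl⟩
      have hP4 : (extPairs u w).ncard ≤ 4 := by omega
      have hmiss : ¬((Af u (ℓ j), Bf u w (ℓ i)) ∈ extPairs u w ∧
          (Af u (ℓ j), Bf u w (ℓ k)) ∈ extPairs u w ∧
          (Af u (ℓ k), Bf u w (ℓ i)) ∈ extPairs u w ∧
          (Af u (ℓ k), Bf u w (ℓ k)) ∈ extPairs u w) := by
        rintro ⟨hm1, hm2, hm3, hm4⟩
        have hm0 : (Af u (ℓ i), Bf u w (ℓ j)) ∈ extPairs u w := by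
          obtain ⟨n, -, hn⟩ := hinfm i 0
          have := hpair n
          rwa [hn, H1 n hn] at this
        have hsub5 : ({(Af u (ℓ i), Bf u w (ℓ j)), (Af u (ℓ j), Bf u w (ℓ i)),
            (Af u (ℓ j), Bf u w (ℓ k)), (Af u (ℓ k), Bf u w (ℓ i)),
            (Af u (ℓ k), Bf u w (ℓ k))} : Set (A × A)) ⊆ extPairs u w := by
          intro e he
          simp only [Set.mem_insert_iff, Set.mem_singleton_iff] at he
          rcases he with rfl|rfl|rfl|rfl|rfl <;> assumption
        have hne4 : (Af u (ℓ k), Bf u w (ℓ i)) ∉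
            ({(Af u (ℓ k), Bf u w (ℓ k))} : Set (A × A)) := by
          intro hmem
          simp only [Set.mem_singleton_iff, Prod.mk.injEq] at hmem
          tauto
        have hne3 : (Af u (ℓ j), Bf u w (ℓ k)) ∉
            ({(Af u (ℓ k), Bf u w (ℓ i)), (Af u (ℓ k), Bf u w (ℓ k))} : Set (A × A)) := by
          intro hmem
          simp only [Set.mem_insert_iff, Set.mem_singleton_iff, Prod.mk.injEq] at hmem
          tauto
        have hne2 : (Af u (ℓ j), Bf u w (ℓ i)) ∉
            ({(Af u (ℓ j), Bf u w (ℓ k)), (Af u (ℓ k), Bf u w (ℓ i)),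
              (Af u (ℓ k), Bf u w (ℓ k))} : Set (A × A)) := by
          intro hmem
          simp only [Set.mem_insert_iff, Set.mem_singleton_iff, Prod.mk.injEq] at hmem
          tauto
        have hne1 : (Af u (ℓ i), Bf u w (ℓ j)) ∉
            ({(Af u (ℓ j), Bf u w (ℓ i)), (Af u (ℓ j), Bf u w (ℓ k)),
              (Af u (ℓ k), Bf u w (ℓ i)), (Af u (ℓ k), Bf u w (ℓ k))} : Set (A × A)) := by
          intro hmem
          simp only [Set.mem_insert_iff, Set.mem_singleton_iff, Prod.mk.injEq] at hmem
          tauto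
        have h5 : ({(Af u (ℓ i), Bf u w (ℓ j)), (Af u (ℓ j), Bf u w (ℓ i)),
            (Af u (ℓ j), Bf u w (ℓ k)), (Af u (ℓ k), Bf u w (ℓ i)),
            (Af u (ℓ k), Bf u w (ℓ k))} : Set (A × A)).ncard = 5 := by
          rw [Set.ncard_insert_of_notMem hne1 (Set.toFinite _),
            Set.ncard_insert_of_notMem hne2 (Set.toFinite _),
            Set.ncard_insert_of_notMem hne3 (Set.toFinite _),
            Set.ncard_insert_of_notMem hne4 (Set.toFinite _),
            Set.ncard_singleton]
        have hle := Set.ncard_le_ncard hsub5 hPfin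
        omega
      have hcases : (Af u (ℓ j), Bf u w (ℓ i)) ∉ extPairs u w ∨
          (Af u (ℓ j), Bf u w (ℓ k)) ∉ extPairs u w ∨
          (Af u (ℓ k), Bf u w (ℓ i)) ∉ extPairs u w ∨
          (Af u (ℓ k), Bf u w (ℓ k)) ∉ extPairs u w := by tauto
      obtain ⟨n₀j, -, hn₀j⟩ := hinfm j 0
      obtain ⟨n₀k, -, hn₀k⟩ := hinfm k 0
      have hfacjw : IsFactor u (ℓ j ++ w) :=
        ⟨occn u w n₀j, by rw [← hn₀j]; exact retw_occurs hinf n₀j⟩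
      have hfackw : IsFactor u (ℓ k ++ w) :=
        ⟨occn u w n₀k, by rw [← hn₀k]; exact retw_occurs hinf n₀k⟩
      have hnsp : ∀ s t : Fin 3, (Af u (ℓ s), Bf u w (ℓ t)) ∉ extPairs u w →
          ∀ n, ret u w n = ℓ s → ret u w (n+1) ≠ ℓ t := by
        intro s t hst n e1 e2
        have := hpair n
        rw [e1, e2] at this
        exact hst this
      rcases hcases with hM | hM | hM | hM
      · -- missing (j,i) : after j comes k
        have hJK : ∀ n, ret u w n = ℓ j → ret u w (n+1) = ℓ k := by
          intro n hn
          rcases H2 n hn with hh | hh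
          · exact absurd hh (hnsp j i hM n hn)
          · exact hh
        refine gap_bound h hinf (fun n => ret u w n = ℓ k) (ℓ k ++ w) hfackw
          (fun p => occT hinf hn₀k) {ℓ k, ℓ k ++ ℓ i ++ ℓ j} (Set.toFinite _)
          (by have := ncard_pair_le (ℓ k) (ℓ k ++ ℓ i ++ ℓ j); omega) ?_
        intro n hFn
        rcases H3 n hFn with hi1 | hk1
        · have hj2 : ret u w (n+2) = ℓ j := H1 (n+1) hi1
          have hk3 : ret u w (n+3) = ℓ k := by
            have := hJK (n+2) hj2
            rwa [show n+2+1 = n+3 by omega] at this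
          refine ⟨3, by omega, hk3, ?_, ?_⟩
          · intro l h1 h2 hE
            interval_cases l
            · exact hik (hi1.symm.trans hE)
            · exact hjk2 (hj2.symm.trans hE)
          · rw [factorAt_three hinf n, hFn, hi1, hj2]; simp
        · refine ⟨1, one_pos, hk1, by intro l h1 h2; omega, ?_⟩
          have hrp : factorAt u (occn u w n) (occn u w (n+1) - occn u w n) = ret u w n := rfl
          rw [hrp, hFn]; simp
      · -- missing (j,k) : after j comes i ; k letters are consecutive
        have hJI : ∀ n, ret u w n = ℓ j → ret u w (n+1) = ℓ i := by
          intro n hn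
          rcases H2 n hn with hh | hh
          · exact hh
          · exact absurd hh (hnsp j k hM n hn)
        refine gap_bound h hinf (fun n => ret u w n = ℓ k) (ℓ k ++ w) hfackw
          (fun p => occT hinf hn₀k) {ℓ k} (Set.finite_singleton _)
          (by rw [Set.ncard_singleton]; omega) ?_
        intro n hFn
        have hk1 : ret u w (n+1) = ℓ k := by
          rcases H3 n hFn with hi1 | hk1
          · exfalso
            have hodd : ∀ c, ret u w (n+1+2*c) = ℓ i ∧ ret u w (n+2+2*c) = ℓ j := by
              intro c
              induction c with
              | zero =>
                constructor
                · rw [show n+1+2*0 = n+1 by ring]; exact hi1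
                · rw [show n+2+2*0 = n+1+1 by ring]; exact H1 (n+1) hi1
              | succ c ih =>
                have h1 : ret u w (n+3+2*c) = ℓ i := by
                  have := hJI (n+2+2*c) ih.2
                  rwa [show n+2+2*c+1 = n+3+2*c by ring] at this
                have h2 : ret u w (n+4+2*c) = ℓ j := by
                  have := H1 (n+3+2*c) h1
                  rwa [show n+3+2*c+1 = n+4+2*c by ring] at this
                constructor
                · rwa [show n+1+2*(c+1) = n+3+2*c by ring]
                · rwa [show n+2+2*(c+1) = n+4+2*c by ring]
            obtain ⟨n', hn'1, hn'2⟩ := hinfm k n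
            obtain ⟨c, hc⟩ : ∃ c, n' = n+1+2*c ∨ n' = n+2+2*c := by
              refine ⟨(n' - n - 1) / 2, by omega⟩
            rcases hc with rfl | rfl
            · exact hik ((hodd c).1.symm.trans hn'2)
            · exact hjk2 ((hodd c).2.symm.trans hn'2)
          · exact hk1
        refine ⟨1, one_pos, hk1, by intro l h1 h2; omega, ?_⟩
        have hrp : factorAt u (occn u w n) (occn u w (n+1) - occn u w n) = ret u w n := rfl
        rw [hrp, hFn]; simp
      · -- missing (k,i) : after k comes k
        have hKK : ∀ n, ret u w n = ℓ k → ret u w (n+1) = ℓ k := by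
          intro n hn
          rcases H3 n hn with hh | hh
          · exact absurd hh (hnsp k i hM n hn)
          · exact hh
        refine gap_bound h hinf (fun n => ret u w n = ℓ k) (ℓ k ++ w) hfackw
          (fun p => occT hinf hn₀k) {ℓ k} (Set.finite_singleton _)
          (by rw [Set.ncard_singleton]; omega) ?_
        intro n hFn
        refine ⟨1, one_pos, hKK n hFn, by intro l h1 h2; omega, ?_⟩
        have hrp : factorAt u (occn u w n) (occn u w (n+1) - occn u w n) = ret u w n := rfl
        rw [hrp, hFn]; simp
      · -- missing (k,k) : after k comes i
        have hKI : ∀ n, ret u w n = ℓ k → ret u w (n+1) = ℓ i := by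
          intro n hn
          rcases H3 n hn with hh | hh
          · exact hh
          · exact absurd hh (hnsp k k hM n hn)
        refine gap_bound h hinf (fun n => ret u w n = ℓ j) (ℓ j ++ w) hfacjw
          (fun p => occT hinf hn₀j) {ℓ j ++ ℓ i, ℓ j ++ ℓ k ++ ℓ i} (Set.toFinite _)
          (by have := ncard_pair_le (ℓ j ++ ℓ i) (ℓ j ++ ℓ k ++ ℓ i); omega) ?_
        intro n hFn
        rcases H2 n hFn with hi1 | hk1
        · have hj2 : ret u w (n+2) = ℓ j := H1 (n+1) hi1
          refine ⟨2, by omega, hj2, ?_, ?_⟩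
          · intro l h1 h2 hE
            rw [show n + l = n + 1 by omega, hi1] at hE
            exact hℓne i j (fun e => hji e.symm) hE
          · rw [factorAt_two hinf n, hFn, hi1]
            simp
        · have hi2 : ret u w (n+2) = ℓ i := by
            have := hKI (n+1) hk1
            rwa [show n+1+1 = n+2 by omega] at this
          have hj3 : ret u w (n+3) = ℓ j := by
            have := H1 (n+2) hi2
            rwa [show n+2+1 = n+3 by omega] at this
          refine ⟨3, by omega, hj3, ?_, ?_⟩
          · intro l h1 h2 hE
            interval_cases l
            · exact hkj2 (hk1.symm.trans hE)
            · exact hij (hi2.symm.trans hE)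
          · rw [factorAt_three hinf n, hFn, hk1, hi2]
            simp
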